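/- Let T be a bipartite graph with parts V_Q of size n and V_S of size r, and let T̄ be the graph on V_Q where q_i and q_j are adjacent iff they have a common neighbor in T. Then for every ε ∈ [0,1], the local Cheeger constant satisfies h_{ε'}(T̄) ≥ h_ε(T) / deg(T), where ε' = (n+r)·ε / ((1+deg(T))·n) and deg(T) is the maximum degree of T. -/

import Mathlib

/-!
STATEMENT 0: For a bipartite (Tanner) graph `T` with parts `V_Q` (size n) and `V_S` (size r),
and its contracted graph `T̄` on `V_Q` (two vertices adjacent iff they share a neighbor in `T`),
for every `ε ∈ [0,1]` we have `h_{ε'}(T̄) ≥ h_ε(T) / deg(T)` where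
`ε' = (n+r)·ε / ((1+deg(T))·n)` and `deg(T)` is the maximum degree of `T`.
The local Cheeger constant `h_ε(G)` is the infimum of `|∂L|/|L|` over subsets `L` of the
vertices with `|L| ≤ ε|V|/2` (valued in `ℝ≥0∞`, so it is `⊤` if no such set exists).
-/

attribute [local instance] Classical.propDecidable

open Finset
open scoped ENNReal

/-- The contracted graph of a bipartite (Tanner) graph `T` on `V_Q ⊕ V_S`:
two vertices of `V_Q` are adjacent iff they are at distance two in `T`,
i.e. they share a common neighbor in `V_S`. -/
def contractedGraph {VQ VS : Type*} (T : SimpleGraph (VQ ⊕ VS)) : SimpleGraph VQ where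
  Adj q q' := q ≠ q' ∧ ∃ s : VS, T.Adj (Sum.inl q) (Sum.inr s) ∧ T.Adj (Sum.inl q') (Sum.inr s)
  symm := by
    constructor
    rintro a b ⟨hne, s, h1, h2⟩
    exact ⟨hne.symm, s, h2, h1⟩
  loopless := by
    constructor
    rintro a ⟨hne, -⟩
    exact hne rfl

/-- The set of edges of `G` with exactly one endpoint in `L`. -/
noncomputable def edgeBoundary {V : Type*} [Fintype V] (G : SimpleGraph V) (L : Finset V) :
    Finset (Sym2 V) :=
  Finset.univ.filter (fun e => e ∈ G.edgeSet ∧ ∃ a b, e = s(a, b) ∧ a ∈ L ∧ b ∉ L)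

/-- The local Cheeger constant `h_ε(G) = min_{L ⊆ V, |L| ≤ ε|V|/2} |∂L|/|L|`,
valued in `ℝ≥0∞` (it is `⊤` when no nonempty admissible `L` exists). -/
noncomputable def localCheeger {V : Type*} [Fintype V] (G : SimpleGraph V) (ε : ℝ) : ℝ≥0∞ :=
  sInf {x : ℝ≥0∞ | ∃ L : Finset V, L.Nonempty ∧ ((L.card : ℝ) ≤ ε * (Fintype.card V) / 2) ∧
    x = ((edgeBoundary G L).card : ℝ≥0∞) / (L.card : ℝ≥0∞)}

theorem stmt0 {VQ VS : Type*} [Fintype VQ] [Fintype VS]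
    (T : SimpleGraph (VQ ⊕ VS))
    -- `T` is bipartite with parts `V_Q` and `V_S`
    (hbip : ∀ a b, T.Adj a b → a.isLeft = b.isRight)
    (n r : ℕ) (hn : n = Fintype.card VQ) (hr : r = Fintype.card VS)
    -- `Δ` is the maximum degree of `T`
    (Δ : ℕ)
    (hΔ : ∀ v, (Finset.univ.filter (fun u => T.Adj v u)).card ≤ Δ)
    (hΔmax : ∃ v, (Finset.univ.filter (fun u => T.Adj v u)).card = Δ)
    (ε : ℝ) (hε0 : 0 ≤ ε) (hε1 : ε ≤ 1)
    (ε' : ℝ) (hε' : ε' = (n + r : ℝ) * ε / ((1 + Δ : ℝ) * n)) :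
    localCheeger (contractedGraph T) ε' ≥ localCheeger T ε / (Δ : ℝ≥0∞) := by
  classical
  rw [ge_iff_le]
  refine le_sInf ?_
  rintro x ⟨L, hLne, hLcard, rfl⟩
  obtain ⟨q0, hq0⟩ := hLne
  have hn1 : 1 ≤ n := by
    rw [hn]; exact Fintype.card_pos_iff.mpr ⟨q0⟩
  -- the neighborhood of L in VS
  set NL : Finset VS := Finset.univ.filter
    (fun s => ∃ q ∈ L, T.Adj (Sum.inl q) (Sum.inr s)) with hNLdef
  set L' : Finset (VQ ⊕ VS) := L.image Sum.inl ∪ NL.image Sum.inr with hL'def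
  have hmemL' : ∀ q : VQ, Sum.inl q ∈ L' ↔ q ∈ L := by
    intro q; simp [hL'def]
  have hmemL'r : ∀ s : VS, Sum.inr s ∈ L' ↔ s ∈ NL := by
    intro s; simp [hL'def]
  -- degree bound for right neighborhoods
  have hdegS : ∀ v : VQ ⊕ VS,
      (Finset.univ.filter (fun s : VS => T.Adj v (Sum.inr s))).card ≤ Δ := by
    intro v
    have hsub : (Finset.univ.filter (fun s : VS => T.Adj v (Sum.inr s))).image Sum.inr ⊆
        Finset.univ.filter (fun u => T.Adj v u) := by
      intro u hu
      simp only [Finset.mem_image, Finset.mem_filter, Finset.mem_univ, true_and] at hu ⊢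
      obtain ⟨s, hs, rfl⟩ := hu
      exact hs
    calc (Finset.univ.filter (fun s : VS => T.Adj v (Sum.inr s))).card
        = ((Finset.univ.filter (fun s : VS => T.Adj v (Sum.inr s))).image Sum.inr).card :=
          (Finset.card_image_of_injective _ Sum.inr_injective).symm
      _ ≤ (Finset.univ.filter (fun u => T.Adj v u)).card := Finset.card_le_card hsub
      _ ≤ Δ := hΔ v
  have hNLcard : NL.card ≤ L.card * Δ := by
    have hsub : NL ⊆ L.biUnion
        (fun q => Finset.univ.filter (fun s : VS => T.Adj (Sum.inl q) (Sum.inr s))) := by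
      intro s hs
      simp only [hNLdef, Finset.mem_filter, Finset.mem_univ, true_and] at hs
      obtain ⟨q, hq, hadj⟩ := hs
      exact Finset.mem_biUnion.mpr ⟨q, hq, by simp [hadj]⟩
    calc NL.card ≤ _ := Finset.card_le_card hsub
      _ ≤ L.card * Δ := Finset.card_biUnion_le_card_mul _ _ _
          (fun q _ => hdegS (Sum.inl q))
  have hL'card : L'.card ≤ (1 + Δ) * L.card := by
    have hdisj : Disjoint (L.image Sum.inl) (NL.image Sum.inr) := by
      rw [Finset.disjoint_left]
      rintro a ha hb
      simp only [Finset.mem_image] at ha hb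
      obtain ⟨q, -, rfl⟩ := ha
      obtain ⟨s, -, h⟩ := hb
      exact Sum.inl_ne_inr h.symm
    calc L'.card ≤ (L.image Sum.inl).card + (NL.image Sum.inr).card :=
          Finset.card_union_le _ _
      _ = L.card + NL.card := by
          rw [Finset.card_image_of_injective _ Sum.inl_injective,
            Finset.card_image_of_injective _ Sum.inr_injective]
      _ ≤ L.card + L.card * Δ := by omega
      _ = (1 + Δ) * L.card := by ring
  have hLL' : L.card ≤ L'.card := by
    calc L.card = (L.image Sum.inl).card :=
          (Finset.card_image_of_injective _ Sum.inl_injective).symm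
      _ ≤ L'.card := Finset.card_le_card (Finset.subset_union_left)
  have hL'ne : L'.Nonempty := ⟨Sum.inl q0, (hmemL' q0).mpr hq0⟩
  -- real cardinality bound for L'
  have hL'cardR : (L'.card : ℝ) ≤ ε * (Fintype.card (VQ ⊕ VS)) / 2 := by
    have hnpos : (0:ℝ) < n := by exact_mod_cast hn1
    have hΔpos : (0:ℝ) < 1 + Δ := by positivity
    have h1 : (L'.card : ℝ) ≤ (1 + Δ : ℝ) * L.card := by
      exact_mod_cast hL'card
    have h2 : (1 + Δ : ℝ) * L.card ≤ (1 + Δ : ℝ) * (ε' * n / 2) := by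
      apply mul_le_mul_of_nonneg_left _ (le_of_lt hΔpos)
      rw [← hn] at hLcard; exact_mod_cast hLcard
    have h3 : (1 + Δ : ℝ) * (ε' * n / 2) = ε * (n + r) / 2 := by
      rw [hε']; field_simp
    have h4 : (Fintype.card (VQ ⊕ VS) : ℝ) = (n : ℝ) + r := by
      rw [Fintype.card_sum, hn, hr]; push_cast; ring
    rw [h4]
    calc (L'.card : ℝ) ≤ (1 + Δ : ℝ) * L.card := h1
      _ ≤ (1 + Δ : ℝ) * (ε' * n / 2) := h2
      _ = ε * ((n:ℝ) + r) / 2 := h3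
  -- properties of boundary edges of L'
  have hP : ∀ e ∈ edgeBoundary T L', ∃ p : VQ × VQ,
      e ∈ T.edgeSet ∧ p.1 ∉ L ∧ p.2 ∈ L ∧
        ∃ s : VS, e = s(Sum.inl p.1, Sum.inr s) ∧ T.Adj (Sum.inl p.2) (Sum.inr s) := by
    intro e he
    simp only [edgeBoundary, Finset.mem_filter, Finset.mem_univ, true_and] at he
    obtain ⟨heE, a, b, rfl, haL, hbL⟩ := he
    have hadj : T.Adj a b := heE
    have hlr := hbip a b hadj
    match a, b with
    | Sum.inl q, Sum.inl q' => simp at hlr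
    | Sum.inr s, Sum.inr s' => simp at hlr
    | Sum.inl q, Sum.inr s =>
        exfalso
        apply hbL
        rw [hmemL'r]
        simp only [hNLdef, Finset.mem_filter, Finset.mem_univ, true_and]
        exact ⟨q, (hmemL' q).mp haL, hadj⟩
    | Sum.inr s, Sum.inl q =>
        have hsNL : s ∈ NL := (hmemL'r s).mp haL
        simp only [hNLdef, Finset.mem_filter, Finset.mem_univ, true_and] at hsNL
        obtain ⟨q', hq'L, hq'adj⟩ := hsNL
        refine ⟨(q, q'), heE, ?_, hq'L, s, Sym2.eq_swap, hq'adj⟩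
        intro hqL
        exact hbL ((hmemL' q).mpr hqL)
  -- the projection map to boundary edges of L in the contracted graph
  let f : Sym2 (VQ ⊕ VS) → Sym2 VQ := fun e =>
    if h : ∃ p : VQ × VQ, e ∈ T.edgeSet ∧ p.1 ∉ L ∧ p.2 ∈ L ∧
        ∃ s : VS, e = s(Sum.inl p.1, Sum.inr s) ∧ T.Adj (Sum.inl p.2) (Sum.inr s)
      then s(h.choose.1, h.choose.2) else s(q0, q0)
  have hmaps : ∀ e ∈ edgeBoundary T L', f e ∈ edgeBoundary (contractedGraph T) L := by
    intro e he
    have h := hP e he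
    simp only [f, dif_pos h]
    obtain ⟨heE, h1, h2, s, hes, hadj'⟩ := h.choose_spec
    set p := h.choose
    have hadj1 : T.Adj (Sum.inl p.1) (Sum.inr s) := by
      rw [hes] at heE; exact heE
    have hcadj : (contractedGraph T).Adj p.1 p.2 := by
      refine ⟨fun hc => h1 (hc ▸ h2), s, hadj1, hadj'⟩
    simp only [edgeBoundary, Finset.mem_filter, Finset.mem_univ, true_and]
    constructor
    · exact hcadj
    · exact ⟨p.2, p.1, by rw [Sym2.eq_swap], h2, h1⟩
  have hfiber : ∀ eb ∈ edgeBoundary (contractedGraph T) L,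
      ((edgeBoundary T L').filter (fun e => f e = eb)).card ≤ Δ := by
    intro eb heb
    simp only [edgeBoundary, Finset.mem_filter, Finset.mem_univ, true_and] at heb
    obtain ⟨-, a, b, rfl, haL, hbL⟩ := heb
    have hsub : (edgeBoundary T L').filter (fun e => f e = s(a, b)) ⊆
        (Finset.univ.filter (fun s : VS => T.Adj (Sum.inl b) (Sum.inr s))).image
          (fun s => s(Sum.inl b, Sum.inr s)) := by
      intro e he
      rw [Finset.mem_filter] at he
      obtain ⟨he, hfe⟩ := he
      have h := hP e he
      simp only [f, dif_pos h] at hfe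
      obtain ⟨heE, h1, h2, s, hes, hadj'⟩ := h.choose_spec
      set p := h.choose
      have hp : p = (b, a) := by
        rw [show s(p.1, p.2) = s(p.1, p.2) from rfl, Sym2.eq_iff] at hfe
        rcases hfe with ⟨hpa, hpb⟩ | ⟨hpb, hpa⟩
        · exact absurd (hpa ▸ haL) h1
        · exact Prod.ext hpb hpa
      rw [hp] at hes
      have hadj1 : T.Adj (Sum.inl b) (Sum.inr s) := by
        rw [hes] at heE; exact heE
      apply Finset.mem_image.mpr
      exact ⟨s, by simp [hadj1], hes.symm⟩
    calc ((edgeBoundary T L').filter (fun e => f e = s(a, b))).card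
        ≤ _ := Finset.card_le_card hsub
      _ ≤ (Finset.univ.filter (fun s : VS => T.Adj (Sum.inl b) (Sum.inr s))).card :=
          Finset.card_image_le
      _ ≤ Δ := hdegS (Sum.inl b)
  have hbound : (edgeBoundary T L').card ≤ Δ * (edgeBoundary (contractedGraph T) L).card :=
    Finset.card_le_mul_card_image_of_maps_to hmaps Δ hfiber
  -- conclude
  apply ENNReal.div_le_of_le_mul
  have hstep : localCheeger T ε ≤
      ((edgeBoundary T L').card : ℝ≥0∞) / (L'.card : ℝ≥0∞) :=
    sInf_le ⟨L', hL'ne, hL'cardR, rfl⟩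
  refine hstep.trans ?_
  have hdiv : ((edgeBoundary T L').card : ℝ≥0∞) / (L'.card : ℝ≥0∞) ≤
      ((Δ * (edgeBoundary (contractedGraph T) L).card : ℕ) : ℝ≥0∞) / (L.card : ℝ≥0∞) :=
    ENNReal.div_le_div (by exact_mod_cast hbound) (by exact_mod_cast hLL')
  refine hdiv.trans_eq ?_
  push_cast
  rw [mul_comm (Δ : ℝ≥0∞), div_eq_mul_inv, div_eq_mul_inv, mul_assoc,
    mul_comm (Δ : ℝ≥0∞), ← mul_assoc]
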